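/- arXiv:2106.14770 — 3 statements merged into one kernel-verified Lean document; each statement's English description precedes it below -/
import Mathlib

section
/- For all positive integers m and n, the infinite series sum over i >= 1 of (-1)^(m(i-1)) / (F_{m(i-1)+n} * F_{m(i+1)+n}) converges to (1/(F_n * F_{2m})) * (2/Φ^n - F_m/F_{m+n}), where Φ = (1+√5)/2. -/
open Real goldenRatio Filter Finset Topology

lemma sqrt5_ne : (√5:ℝ) ≠ 0 := by positivity

lemma fib_sub_alg (x y s : ℝ) (hs : s ≠ 0) (hsub : x - y = s) (k : ℕ) :
    (x^(k+1) - y^(k+1))/s - x * ((x^k - y^k)/s) = y ^ k := by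
  field_simp
  linear_combination (y ^ k) * hsub

lemma docagne_alg (x y s : ℝ) (hs : s ≠ 0) (hsub : x - y = s) (hmul : x * y = -1)
    (m a : ℕ) :
    (x^(a+1)-y^(a+1))/s * ((x^(a+2*m)-y^(a+2*m))/s)
      - (x^a-y^a)/s * ((x^(a+2*m+1)-y^(a+2*m+1))/s)
      = (-1:ℝ)^a * ((x^(2*m)-y^(2*m))/s) := by
  have hu : x^a * y^a = (-1:ℝ)^a := by rw [← mul_pow, hmul]
  have key : (x^(a+1)-y^(a+1))*(x^(a+2*m)-y^(a+2*m)) - (x^a-y^a)*(x^(a+2*m+1)-y^(a+2*m+1)) = (-1:ℝ)^a*(x^(2*m)-y^(2*m))*s := by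
    linear_combination (x^a*y^a*(x^(2*m)-y^(2*m)))*hsub + ((x^(2*m)-y^(2*m))*s)*hu
  rw [div_mul_div_comm, div_mul_div_comm, ← sub_div, key]
  field_simp

lemma fib_split_alg (x y s : ℝ) (hs : s ≠ 0) (m n : ℕ) :
    (x^(m+n)-y^(m+n))/s = (x^m-y^m)/s * x ^ n + y ^ m * ((x^n - y^n)/s) := by
  field_simp
  ring

lemma fib_sub_gold (k : ℕ) : (Nat.fib (k+1) : ℝ) - φ * Nat.fib k = ψ ^ k := by
  rw [Real.coe_fib_eq, Real.coe_fib_eq]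
  exact fib_sub_alg φ ψ (√5) sqrt5_ne goldenRatio_sub_goldenConj k

lemma docagne (m a : ℕ) :
    (Nat.fib (a+1) : ℝ) * Nat.fib (a+2*m) - (Nat.fib a : ℝ) * Nat.fib (a+2*m+1)
      = (-1:ℝ)^a * Nat.fib (2*m) := by
  simp only [Real.coe_fib_eq]
  exact docagne_alg φ ψ (√5) sqrt5_ne goldenRatio_sub_goldenConj goldenRatio_mul_goldenConj m a

lemma fib_split (m n : ℕ) :
    (Nat.fib (m+n) : ℝ) = (Nat.fib m : ℝ) * φ ^ n + ψ ^ m * Nat.fib n := by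
  simp only [Real.coe_fib_eq]
  exact fib_split_alg φ ψ (√5) sqrt5_ne m n

lemma two_pow_le (i : ℕ) : 2^i ≤ Nat.fib (i+1) * Nat.fib (i+2) := by
  induction i with
  | zero => simp
  | succ k ih =>
    have h1 : Nat.fib (k+1) ≤ Nat.fib (k+2) := Nat.fib_le_fib_succ
    have h3 : Nat.fib (k+3) = Nat.fib (k+1) + Nat.fib (k+2) := Nat.fib_add_two
    calc 2^(k+1) = 2 * 2^k := by ring
    _ ≤ 2 * (Nat.fib (k+1) * Nat.fib (k+2)) := by omega
    _ ≤ Nat.fib (k+2) * Nat.fib (k+3) := by nlinarith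

lemma ratio_alg (Fk Fk1 x v : ℝ) (hFk : Fk ≠ 0) (h : Fk1 - x * Fk = v) :
    Fk1 / Fk - x = v / Fk := by
  field_simp
  linarith

lemma term_alg (Fa Fa1 Fb Fb1 F2m p e : ℝ) (hFa : Fa ≠ 0) (hFb : Fb ≠ 0) (hF2m : F2m ≠ 0)
    (key : Fa1 * Fb - Fa * Fb1 = p * e * F2m) (he : e * e = 1) :
    p / (Fa * Fb) = (e / F2m) * (Fa1 / Fa - Fb1 / Fb) := by
  rw [div_sub_div _ _ hFa hFb, div_mul_div_comm,
    div_eq_div_iff (by positivity) (by simp [hF2m, hFa, hFb])]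
  linear_combination (-e*Fa*Fb)*key + (-p*F2m*Fa*Fb)*he

lemma value_alg (Fn Fn1 Fm Fmn Fmn1 F2m x u v w e : ℝ)
    (hFn : Fn ≠ 0) (hFmn : Fmn ≠ 0) (hF2m : F2m ≠ 0) (hu : u ≠ 0)
    (k0 : Fn1 - x * Fn = v) (k1 : Fmn1 - x * Fmn = w * v)
    (k2 : Fmn = Fm * u + w * Fn) (hmix : u * v = e) (he : e * e = 1) :
    (e / F2m) * (Fn1 / Fn + Fmn1 / Fmn - x - x)
      = (1 / (Fn * F2m)) * (2 / u - Fm / Fmn) := by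
  have h1 : Fn1 = x * Fn + v := by linarith
  have h2 : Fmn1 = x * Fmn + w * v := by linarith
  subst h1 h2
  field_simp
  linear_combination (e*(Fmn + w*Fn))*hmix + (Fmn + w*Fn)*he - k2

theorem stmt_2 (m n : ℕ) (hm : 0 < m) (hn : 0 < n) :
    HasSum (fun i : ℕ =>
      (-1 : ℝ) ^ (m * i) /
        ((Nat.fib (m * i + n) : ℝ) * (Nat.fib (m * (i + 2) + n) : ℝ)))
      ((1 / ((Nat.fib n : ℝ) * (Nat.fib (2 * m) : ℝ))) *
        (2 / ((1 + Real.sqrt 5) / 2) ^ n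
          - (Nat.fib m : ℝ) / (Nat.fib (m + n) : ℝ))) := by
  set f : ℕ → ℝ := fun i =>
      (-1 : ℝ) ^ (m * i) /
        ((Nat.fib (m * i + n) : ℝ) * (Nat.fib (m * (i + 2) + n) : ℝ)) with hf
  set B : ℕ → ℝ := fun i => (Nat.fib (m * i + n + 1) : ℝ) / (Nat.fib (m * i + n) : ℝ)
    with hB
  set c : ℝ := (-1:ℝ)^n / (Nat.fib (2*m) : ℝ) with hc
  have hFpos : ∀ k : ℕ, 0 < k → (0:ℝ) < Nat.fib k := fun k hk => by
    exact_mod_cast Nat.fib_pos.2 hk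
  have hFne : ∀ k : ℕ, 0 < k → (Nat.fib k : ℝ) ≠ 0 := fun k hk => (hFpos k hk).ne'
  have hidx : ∀ i : ℕ, 0 < m * i + n := fun i => by positivity
  have h2m : (0:ℝ) < Nat.fib (2*m) := hFpos _ (by omega)
  have hnn : (-1:ℝ)^n * (-1:ℝ)^n = 1 := by
    rw [← pow_add, ← two_mul, pow_mul]; norm_num
  -- per-term telescoping identity
  have hterm : ∀ N : ℕ, f N = c * (B N - B (N + 2)) := by
    intro N
    have hi2 : m * (N + 2) + n = (m * N + n) + 2 * m := by ring
    have key := docagne m (m * N + n)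
    rw [pow_add] at key
    simp only [hf, hB, hc, hi2]
    exact term_alg _ _ _ _ _ _ _ (hFne _ (hidx N)) (hFne _ (by omega)) h2m.ne' key hnn
  -- partial sums
  have hpartial : ∀ N : ℕ, ∑ i ∈ Finset.range N, f i
      = c * (B 0 + B 1 - B N - B (N+1)) := by
    intro N
    induction N with
    | zero => simp
    | succ k ih =>
      rw [Finset.sum_range_succ, ih, hterm k]
      ring
  -- summability
  have hnorm : ∀ i : ℕ, ‖f i‖ ≤ (1/2:ℝ)^i := by
    intro i
    have hp1 : (0:ℝ) < Nat.fib (m*i+n) := hFpos _ (hidx i)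
    have hp2 : (0:ℝ) < Nat.fib (m*(i+2)+n) := hFpos _ (by positivity)
    have hb1 : (Nat.fib (i+1) : ℝ) ≤ Nat.fib (m*i+n) := by
      have h := Nat.le_mul_of_pos_left i hm
      exact_mod_cast Nat.fib_mono (by omega)
    have hb2 : (Nat.fib (i+2) : ℝ) ≤ Nat.fib (m*(i+2)+n) := by
      have h := Nat.le_mul_of_pos_left (i+2) hm
      exact_mod_cast Nat.fib_mono (by omega)
    have hgeo : (2:ℝ)^i ≤ (Nat.fib (m*i+n) : ℝ) * Nat.fib (m*(i+2)+n) := by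
      have hcast : (2:ℝ)^i ≤ (Nat.fib (i+1) : ℝ) * Nat.fib (i+2) := by
        exact_mod_cast two_pow_le i
      calc (2:ℝ)^i ≤ (Nat.fib (i+1) : ℝ) * Nat.fib (i+2) := hcast
      _ ≤ (Nat.fib (m*i+n) : ℝ) * Nat.fib (m*(i+2)+n) :=
        mul_le_mul hb1 hb2 (by positivity) hp1.le
    have hfi : ‖f i‖ = 1 / ((Nat.fib (m*i+n) : ℝ) * Nat.fib (m*(i+2)+n)) := by
      simp only [hf]
      rw [norm_div, norm_pow, norm_neg, norm_one, one_pow,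
        Real.norm_eq_abs, abs_of_pos (by positivity)]
    rw [hfi, div_pow, one_pow]
    exact one_div_le_one_div_of_le (by positivity) hgeo
  have hsumnorm : Summable fun i => ‖f i‖ :=
    Summable.of_nonneg_of_le (fun i => norm_nonneg _) hnorm
      (summable_geometric_of_lt_one (by norm_num) (by norm_num))
  -- limit of B
  have hψ : |ψ| < 1 := by
    rw [abs_of_neg goldenConj_neg]
    linarith [neg_one_lt_goldenConj]
  have hBdiff : ∀ N : ℕ, B N - φ = ψ^(m*N+n) / Nat.fib (m*N+n) := fun N =>
    ratio_alg _ _ _ _ (hFne _ (hidx N)) (fib_sub_gold (m*N+n))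
  have hBlim : Tendsto B atTop (𝓝 φ) := by
    have h0 : Tendsto (fun N : ℕ => B N - φ) atTop (𝓝 0) := by
      refine squeeze_zero_norm (a := fun N : ℕ => |ψ|^N) ?_ ?_
      · intro N
        rw [hBdiff N, Real.norm_eq_abs, abs_div, abs_pow,
          abs_of_pos (hFpos _ (hidx N))]
        have h1 : (1:ℝ) ≤ Nat.fib (m*N+n) := by
          exact_mod_cast Nat.fib_pos.2 (hidx N)
        have hle : m*N+n ≥ N := by
          have := Nat.le_mul_of_pos_left N hm; omega
        calc |ψ|^(m*N+n) / (Nat.fib (m*N+n) : ℝ) ≤ |ψ|^(m*N+n) / 1 := by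
              apply div_le_div_of_nonneg_left ?_ ?_ h1 <;> positivity
        _ = |ψ|^(m*N+n) := by ring
        _ ≤ |ψ|^N := pow_le_pow_of_le_one (abs_nonneg _) hψ.le hle
      · exact tendsto_pow_atTop_nhds_zero_of_lt_one (abs_nonneg _) hψ
    have h1 := h0.add (tendsto_const_nhds (x := (φ:ℝ)) (f := atTop))
    simpa using h1
  have hBlim1 : Tendsto (fun N => B (N+1)) atTop (𝓝 φ) :=
    hBlim.comp (tendsto_add_atTop_nat 1)
  have hT : Tendsto (fun N : ℕ => ∑ i ∈ Finset.range N, f i) atTop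
      (𝓝 (c * (B 0 + B 1 - φ - φ))) := by
    have h2 : Tendsto (fun N : ℕ => c * (B 0 + B 1 - B N - B (N+1))) atTop
        (𝓝 (c * (B 0 + B 1 - φ - φ))) :=
      (((tendsto_const_nhds (x := B 0 + B 1)).sub hBlim).sub hBlim1).const_mul c
    exact h2.congr (fun N => (hpartial N).symm)
  have hHasSum : HasSum f (c * (B 0 + B 1 - φ - φ)) :=
    (hasSum_iff_tendsto_nat_of_summable_norm hsumnorm).2 hT
  -- final value identity
  have hval : c * (B 0 + B 1 - φ - φ)
      = (1 / ((Nat.fib n : ℝ) * (Nat.fib (2 * m) : ℝ))) *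
        (2 / ((1 + Real.sqrt 5) / 2) ^ n
          - (Nat.fib m : ℝ) / (Nat.fib (m + n) : ℝ)) := by
    have e0 : m * 0 + n = n := by ring
    have e1 : m * 1 + n = m + n := by ring
    have k1 := fib_sub_gold (m+n)
    rw [pow_add] at k1
    have hmix : (φ:ℝ)^n * ψ^n = (-1:ℝ)^n := by rw [← mul_pow, goldenRatio_mul_goldenConj]
    simp only [hB, hc, e0, e1]
    have := value_alg (Nat.fib n) (Nat.fib (n+1)) (Nat.fib m) (Nat.fib (m+n))
      (Nat.fib (m+n+1)) (Nat.fib (2*m)) φ (φ^n) (ψ^n) (ψ^m) ((-1:ℝ)^n)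
      (hFne n hn) (hFne (m+n) (by omega)) h2m.ne' (by positivity)
      (fib_sub_gold n) k1 (fib_split m n) hmix hnn
    exact this
  rw [← hval]
  exact hHasSum
end

section
/- For all positive integers m and n, the infinite series sum over i >= 1 of (-1)^(m(i-1)) / (L_{m(i-1)+n} * L_{m(i+1)+n}) converges to (1/(5 * F_n * F_{2m})) * (2/L_n + L_m/L_{m+n} - 2/Φ^n), where Φ = (1+√5)/2. -/
def lucas : ℕ → ℕ
  | 0 => 2
  | 1 => 1
  | n + 2 => lucas (n + 1) + lucas n

noncomputable def sq5 : ℝ := Real.sqrt 5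
noncomputable def phR : ℝ := (1 + sq5) / 2
noncomputable def psR : ℝ := (1 - sq5) / 2

lemma sq5_sq : sq5 ^ 2 = 5 := Real.sq_sqrt (by norm_num)
lemma sq5_pos : 0 < sq5 := Real.sqrt_pos.mpr (by norm_num)

lemma ph_mul_ps : phR * psR = -1 := by
  unfold phR psR; linear_combination (-1/4 : ℝ) * sq5_sq

lemma binet_lucas : ∀ k, (lucas k : ℝ) = phR ^ k + psR ^ k
  | 0 => by norm_num [lucas]
  | 1 => by norm_num [lucas, phR, psR]; ring
  | (k + 2) => by
      have h1 := binet_lucas (k + 1)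
      have h2 := binet_lucas k
      show ((lucas (k+1) + lucas k : ℕ) : ℝ) = _
      push_cast
      rw [h1, h2]
      unfold phR psR
      linear_combination (-(((1+sq5)/2) ^ k + ((1-sq5)/2) ^ k) / 4) * sq5_sq

lemma binet_fib : ∀ k, (Nat.fib k : ℝ) * sq5 = phR ^ k - psR ^ k
  | 0 => by norm_num
  | 1 => by norm_num [phR, psR]; ring
  | (k + 2) => by
      have h1 := binet_fib (k + 1)
      have h2 := binet_fib k
      rw [Nat.fib_add_two]
      push_cast
      unfold phR psR at *
      linear_combination h1 + h2 + ((((1-sq5)/2) ^ k - ((1+sq5)/2) ^ k) / 4) * sq5_sq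

lemma lucas_pos : ∀ k, 0 < lucas k
  | 0 => by norm_num [lucas]
  | 1 => by norm_num [lucas]
  | (k + 2) => by
      have := lucas_pos k
      show 0 < lucas (k+1) + lucas k
      omega

lemma ps_abs_lt_one : |psR| < 1 := by
  rw [abs_lt]; unfold psR
  constructor <;> nlinarith [sq5_pos, sq5_sq, Real.sqrt_nonneg 5]

lemma ph_pos : 0 < phR := by have := sq5_pos; unfold phR; linarith

theorem stmt_3 (m n : ℕ) (hm : 0 < m) (hn : 0 < n) :
    HasSum (fun i : ℕ =>
      (-1 : ℝ) ^ (m * i) /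
        ((lucas (m * i + n) : ℝ) * (lucas (m * (i + 2) + n) : ℝ)))
      ((1 / (5 * (Nat.fib n : ℝ) * (Nat.fib (2 * m) : ℝ))) *
        (2 / (lucas n : ℝ) + (lucas m : ℝ) / (lucas (m + n) : ℝ)
          - 2 / ((1 + Real.sqrt 5) / 2) ^ n)) := by
  have hLpos : ∀ k, (0:ℝ) < (lucas k : ℝ) := fun k => by exact_mod_cast lucas_pos k
  have hLone : ∀ k, (1:ℝ) ≤ (lucas k : ℝ) := fun k => by exact_mod_cast lucas_pos k
  set e : ℕ → ℝ := fun i => -2 * psR ^ (m*i+n) / (sq5 * (lucas (m*i+n) : ℝ)) with hedef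
  set c : ℝ := (-1:ℝ)^n / (2 * (Nat.fib (2*m) : ℝ)) with hcdef
  -- summability
  have hbound : ∀ i, ‖e i‖ ≤ (2/sq5) * (|psR|^m)^i := by
    intro i
    have h1 : ‖e i‖ = 2 * |psR|^(m*i+n) / (sq5 * (lucas (m*i+n):ℝ)) := by
      rw [hedef]
      rw [norm_div, norm_mul, norm_mul]
      simp [abs_pow, abs_of_pos sq5_pos, abs_of_pos (hLpos (m*i+n))]
    rw [h1]
    have h2 : |psR|^(m*i+n) ≤ |psR|^(m*i) :=
      pow_le_pow_of_le_one (abs_nonneg _) ps_abs_lt_one.le (Nat.le_add_right _ _)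
    have h3 : sq5 * 1 ≤ sq5 * (lucas (m*i+n):ℝ) := by
      nlinarith [sq5_pos, hLone (m*i+n)]
    calc 2 * |psR|^(m*i+n) / (sq5 * (lucas (m*i+n):ℝ))
        ≤ 2 * |psR|^(m*i) / (sq5 * 1) := by
          apply div_le_div₀ (by positivity) (by nlinarith) (by nlinarith [sq5_pos]) h3
      _ = (2/sq5) * (|psR|^m)^i := by rw [← pow_mul]; ring
  have hgeo : Summable (fun i : ℕ => (2/sq5) * (|psR|^m)^i) :=
    (summable_geometric_of_lt_one (by positivity)
      (pow_lt_one₀ (abs_nonneg _) ps_abs_lt_one hm.ne')).mul_left _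
  have hsum : Summable e := Summable.of_norm_bounded hgeo hbound
  have he : HasSum e (∑' i, e i) := hsum.hasSum
  have he2 : HasSum (fun i => e (i+2)) ((∑' i, e i) - (e 0 + e 1)) := by
    apply (hasSum_nat_add_iff 2).mpr
    rw [show (∑' i, e i) - (e 0 + e 1) + ∑ i ∈ Finset.range 2, e i = ∑' i, e i by simp [Finset.sum_range_succ]]
    exact he
  have hdiff : HasSum (fun i => e (i+2) - e i) (-(e 0 + e 1)) := by
    have h := he2.sub he
    rw [show -(e 0 + e 1) = (∑' i, e i) - (e 0 + e 1) - ∑' i, e i by ring]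
    exact h
  have hfin : HasSum (fun i => c * (e (i+2) - e i)) (c * -(e 0 + e 1)) := hdiff.mul_left c
  -- term identity
  have hterm : ∀ i : ℕ, (-1 : ℝ) ^ (m * i) /
        ((lucas (m * i + n) : ℝ) * (lucas (m * (i + 2) + n) : ℝ))
      = c * (e (i+2) - e i) := by
    intro i
    have hb : m*(i+2)+n = m*i+n+(m+m) := by ring
    have hL1 : (lucas (m*i+n):ℝ) = phR^(m*i)*phR^n + psR^(m*i)*psR^n := by
      rw [binet_lucas, pow_add, pow_add]
    have hL2 : (lucas (m*(i+2)+n):ℝ)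
        = phR^(m*i)*phR^n*(phR^m)^2 + psR^(m*i)*psR^n*(psR^m)^2 := by
      rw [hb, binet_lucas, pow_add, pow_add, pow_add, pow_add]; ring
    have hF : (Nat.fib (2*m):ℝ) * sq5 = (phR^m)^2 - (psR^m)^2 := by
      rw [binet_fib, two_mul, pow_add]; ring
    have hps2 : psR^(m*(i+2)+n) = psR^(m*i)*psR^n*(psR^m)^2 := by
      rw [hb, pow_add, pow_add, pow_add]; ring
    have hAB : phR^n * psR^n = (-1:ℝ)^n := by rw [← mul_pow, ph_mul_ps]
    have hPQ : phR^(m*i) * psR^(m*i) = (-1:ℝ)^(m*i) := by rw [← mul_pow, ph_mul_ps]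
    have hE : ((-1:ℝ)^n)^2 = 1 := by
      rw [← pow_mul, mul_comm, pow_mul]; norm_num
    have hD : ((-1:ℝ)^(m*i))^2 = 1 := by
      rw [← pow_mul, mul_comm, pow_mul]; norm_num
    have hn1 : (lucas (m*i+n):ℝ) ≠ 0 := (hLpos _).ne'
    have hn2 : (lucas (m*(i+2)+n):ℝ) ≠ 0 := (hLpos _).ne'
    have hnF : (Nat.fib (2*m):ℝ) ≠ 0 := by
      have h0 : 0 < Nat.fib (2*m) := Nat.fib_pos.mpr (by omega)
      exact_mod_cast h0.ne'
    have hns : sq5 ≠ 0 := sq5_pos.ne'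
    rw [hedef, hcdef]
    simp only
    rw [hps2, pow_add psR (m*i) n]
    set A := phR^n with hA
    set B := psR^n with hB
    set C := phR^m with hC
    set D := psR^m with hD2
    set P := phR^(m*i) with hP
    set Q := psR^(m*i) with hQ
    set ε := (-1:ℝ)^n with he1
    set δ := (-1:ℝ)^(m*i) with hd1
    clear_value A B C D P Q ε δ
    rw [hL1] at hn1
    rw [hL2] at hn2
    rw [hL1, hL2]
    field_simp
    linear_combination (Q*B*P*A*ε) * hF - (A*B*ε*(Nat.fib (2*m):ℝ)*sq5) * hPQ - (δ*ε*(Nat.fib (2*m):ℝ)*sq5) * hAB - (δ*(Nat.fib (2*m):ℝ)*sq5) * hE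
  have hval : ((1 / (5 * (Nat.fib n : ℝ) * (Nat.fib (2 * m) : ℝ))) *
        (2 / (lucas n : ℝ) + (lucas m : ℝ) / (lucas (m + n) : ℝ)
          - 2 / ((1 + Real.sqrt 5) / 2) ^ n)) = c * -(e 0 + e 1) := by
    have hphi : ((1 + Real.sqrt 5)/2) = phR := rfl
    rw [hphi]
    have hLn : (lucas n:ℝ) = phR^n + psR^n := binet_lucas n
    have hLm : (lucas m:ℝ) = phR^m + psR^m := binet_lucas m
    have hLmn : (lucas (m+n):ℝ) = phR^m*phR^n + psR^m*psR^n := by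
      rw [binet_lucas, pow_add, pow_add]
    have hFn : (Nat.fib n:ℝ) * sq5 = phR^n - psR^n := binet_fib n
    have hF : (Nat.fib (2*m):ℝ) * sq5 = (phR^m)^2 - (psR^m)^2 := by
      rw [binet_fib, two_mul, pow_add]; ring
    have hAB : phR^n * psR^n = (-1:ℝ)^n := by rw [← mul_pow, ph_mul_ps]
    have hE : ((-1:ℝ)^n)^2 = 1 := by
      rw [← pow_mul, mul_comm, pow_mul]; norm_num
    have hnLn : (lucas n:ℝ) ≠ 0 := (hLpos _).ne'
    have hnLmn : (lucas (m+n):ℝ) ≠ 0 := (hLpos _).ne'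
    have hnFn : (Nat.fib n:ℝ) ≠ 0 := by
      have h0 : 0 < Nat.fib n := Nat.fib_pos.mpr hn
      exact_mod_cast h0.ne'
    have hnF : (Nat.fib (2*m):ℝ) ≠ 0 := by
      have h0 : 0 < Nat.fib (2*m) := Nat.fib_pos.mpr (by omega)
      exact_mod_cast h0.ne'
    have hns : sq5 ≠ 0 := sq5_pos.ne'
    have hnA : phR^n ≠ 0 := pow_ne_zero _ ph_pos.ne'
    rw [hedef, hcdef]
    simp only
    rw [show m*0+n = n by ring, show m*1+n = m+n by ring, pow_add psR m n]
    set A := phR^n with hA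
    set B := psR^n with hB
    set C := phR^m with hC
    set D := psR^m with hD2
    set ε := (-1:ℝ)^n with he1
    clear_value A B C D ε
    rw [hLn] at hnLn
    rw [hLmn] at hnLmn
    rw [hLn, hLm, hLmn]
    have hnLmn' : A*C + B*D ≠ 0 := by rwa [mul_comm A C, mul_comm B D]
    field_simp
    linear_combination ((Nat.fib n:ℝ)*(A*B*ε*(A*C+A*D+2*B*D))) * sq5_sq - (sq5*(A*B*ε*(A*C+A*D+2*B*D))) * hFn - ((A-B)*sq5*(A*C+A*D+2*B*D)*ε) * hAB - ((A-B)*sq5*(A*C+A*D+2*B*D)) * hE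
  rw [hval]
  exact HasSum.congr_fun hfin (fun i => hterm i)
end

section
/- For every positive integer m, the infinite series sum over i >= 1 of (-1)^(m(i-1)) / (L_{m(i-1)} * L_{m(i+1)}) converges to 1/(√5 * F_{2m}) - 1/(2 * L_m^2). -/
open Real Filter Finset Topology

lemma lucasR : ∀ n : ℕ, (lucas n : ℝ) = goldenRatio ^ n + goldenConj ^ n
  | 0 => by norm_num [lucas]
  | 1 => by norm_num [lucas, goldenRatio_add_goldenConj]
  | (n + 2) => by
      rw [lucas]
      push_cast
      rw [lucasR (n + 1), lucasR n]
      have h55 : Real.sqrt 5 ^ 2 = 5 := Real.sq_sqrt (by norm_num)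
      linear_combination goldenRatio ^ n * goldenRatio_sq + goldenConj ^ n * goldenConj_sq -
        ((goldenRatio ^ n + goldenConj ^ n) / 2) * h55

lemma lucas_pos_s6 (n : ℕ) : 0 < lucas n := by
  induction n using Nat.twoStepInduction with
  | zero => norm_num [lucas]
  | one => norm_num [lucas]
  | more n ih1 ih2 => rw [lucas]; omega

lemma key (a k : ℕ) :
    (Nat.fib (a + 2 * k) : ℝ) * lucas a - (Nat.fib a : ℝ) * lucas (a + 2 * k)
      = 2 * (-1) ^ a * Nat.fib (2 * k) := by
  have h5 : Real.sqrt 5 ≠ 0 := by positivity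
  have hneg : (-1 : ℝ) ^ a = goldenRatio ^ a * goldenConj ^ a := by
    rw [← mul_pow, goldenRatio_mul_goldenConj]
  rw [Real.coe_fib_eq, Real.coe_fib_eq, Real.coe_fib_eq, lucasR, lucasR, hneg,
    pow_add, pow_add, mul_comm 2 k, pow_mul, pow_mul]
  field_simp
  ring

lemma fib_two_mul_R (k : ℕ) : (Nat.fib (2 * k) : ℝ) = Nat.fib k * lucas k := by
  have h5 : Real.sqrt 5 ≠ 0 := by positivity
  rw [Real.coe_fib_eq, Real.coe_fib_eq, lucasR, mul_comm 2 k, pow_mul, pow_mul]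
  field_simp
  ring

lemma lucas_lower (n : ℕ) : goldenRatio ^ n - 1 ≤ (lucas n : ℝ) := by
  rw [lucasR]
  have h1 : |goldenConj ^ n| ≤ 1 := by
    rw [abs_pow]
    apply pow_le_one₀ (abs_nonneg _)
    rw [abs_of_neg goldenConj_neg]
    linarith [neg_one_lt_goldenConj]
  linarith [neg_abs_le (goldenConj ^ n)]

theorem stmt_6 (m : ℕ) (hm : 0 < m) :
    HasSum (fun i : ℕ =>
      (-1 : ℝ) ^ (m * i) /
        ((lucas (m * i) : ℝ) * (lucas (m * (i + 2)) : ℝ)))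
      (1 / (Real.sqrt 5 * (Nat.fib (2 * m) : ℝ)) - 1 / (2 * (lucas m : ℝ) ^ 2)) := by
  set f : ℕ → ℝ := fun i =>
    (-1 : ℝ) ^ (m * i) / ((lucas (m * i) : ℝ) * (lucas (m * (i + 2)) : ℝ)) with hf
  have hLpos : ∀ n : ℕ, (0 : ℝ) < lucas n := fun n => by exact_mod_cast lucas_pos_s6 n
  have hLone : ∀ n : ℕ, (1 : ℝ) ≤ lucas n := fun n => by
    have := lucas_pos_s6 n; exact_mod_cast this
  have hFpos : (0 : ℝ) < Nat.fib m := by exact_mod_cast Nat.fib_pos.mpr hm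
  have hF2pos : (0 : ℝ) < Nat.fib (2 * m) := by
    exact_mod_cast Nat.fib_pos.mpr (by omega)
  have h5 : (0 : ℝ) < Real.sqrt 5 := by positivity
  set t : ℕ → ℝ := fun i => (Nat.fib (m * i) : ℝ) / (lucas (m * i) : ℝ) with ht
  set c : ℝ := 1 / (2 * Nat.fib (2 * m)) with hc
  -- step identity
  have hstep : ∀ i : ℕ, f i = c * (t (i + 2) - t i) := by
    intro i
    have hk := key (m * i) m
    have hi2 : m * (i + 2) = m * i + 2 * m := by ring
    simp only [hf, ht, hc, hi2]
    rw [div_sub_div _ _ (hLpos (m * i + 2 * m)).ne' (hLpos (m * i)).ne']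
    have h1 := (hLpos (m * i)).ne'
    have h2 := (hLpos (m * i + 2 * m)).ne'
    field_simp
    linear_combination (-1 : ℝ) * hk
  -- partial sums
  have hpartial : ∀ N, ∑ i ∈ range N, f i = c * (t (N + 1) + t N - t 1 - t 0) := by
    intro N
    induction N with
    | zero => simp
    | succ N ih => rw [sum_range_succ, ih, hstep N]; ring
  -- closed form of t
  set q : ℝ := (goldenConj / goldenRatio) ^ m with hq
  have hrlt : |goldenConj / goldenRatio| < 1 := by
    rw [abs_div, abs_of_pos goldenRatio_pos, div_lt_one goldenRatio_pos, abs_of_neg goldenConj_neg]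
    linarith [neg_one_lt_goldenConj, one_lt_goldenRatio]
  have hqlt : |q| < 1 := by
    rw [hq, abs_pow]
    calc |goldenConj / goldenRatio| ^ m ≤ |goldenConj / goldenRatio| ^ 1 :=
          pow_le_pow_of_le_one (abs_nonneg _) hrlt.le hm
      _ < 1 := by rwa [pow_one]
  have hts : ∀ N, t N = (1 - q ^ N) / (Real.sqrt 5 * (1 + q ^ N)) := by
    intro N
    have hφ : (0 : ℝ) < goldenRatio ^ (m * N) := pow_pos goldenRatio_pos _
    have hqN : q ^ N = goldenConj ^ (m * N) / goldenRatio ^ (m * N) := by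
      rw [hq, ← pow_mul, div_pow]
    have hLn : (0 : ℝ) < goldenRatio ^ (m * N) + goldenConj ^ (m * N) := by
      rw [← lucasR]; exact hLpos _
    have hone : 1 + goldenConj ^ (m * N) / goldenRatio ^ (m * N)
        = (goldenRatio ^ (m * N) + goldenConj ^ (m * N)) / goldenRatio ^ (m * N) := by
      field_simp
    have hd : Real.sqrt 5 * (1 + goldenConj ^ (m * N) / goldenRatio ^ (m * N)) ≠ 0 :=
      mul_ne_zero h5.ne' (by rw [hone]; exact (div_pos hLn hφ).ne')
    simp only [ht]
    rw [Real.coe_fib_eq, lucasR, hqN, div_eq_div_iff hLn.ne' hd]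
    field_simp
  have htend0 : Tendsto (fun N : ℕ => q ^ N) atTop (𝓝 0) :=
    tendsto_pow_atTop_nhds_zero_of_abs_lt_one hqlt
  have httend : Tendsto t atTop (𝓝 (1 / Real.sqrt 5)) := by
    have h1 : Tendsto (fun N : ℕ => (1 - q ^ N) / (Real.sqrt 5 * (1 + q ^ N))) atTop
        (𝓝 ((1 - 0) / (Real.sqrt 5 * (1 + 0)))) := by
      apply Tendsto.div
      · exact tendsto_const_nhds.sub htend0
      · exact tendsto_const_nhds.mul (tendsto_const_nhds.add htend0)
      · simp [h5.ne']
    have h2 := Filter.Tendsto.congr (fun N => (hts N).symm) h1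
    convert h2 using 2
    norm_num
  -- the value
  have ht0 : t 0 = 0 := by simp [ht]
  have ht1 : t 1 = (Nat.fib m : ℝ) / (lucas m : ℝ) := by simp [ht]
  have hval : c * (1 / Real.sqrt 5 + 1 / Real.sqrt 5 - t 1 - t 0)
      = 1 / (Real.sqrt 5 * (Nat.fib (2 * m) : ℝ)) - 1 / (2 * (lucas m : ℝ) ^ 2) := by
    rw [ht1, ht0, hc, fib_two_mul_R]
    have h1 := hFpos.ne'
    have h2 := (hLpos m).ne'
    field_simp
    ring
  have hsumlim : Tendsto (fun N => ∑ i ∈ range N, f i) atTop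
      (𝓝 (1 / (Real.sqrt 5 * (Nat.fib (2 * m) : ℝ)) - 1 / (2 * (lucas m : ℝ) ^ 2))) := by
    rw [← hval]
    apply Filter.Tendsto.congr (fun N => (hpartial N).symm)
    apply Tendsto.const_mul
    apply Tendsto.sub
    apply Tendsto.sub
    apply Tendsto.add
    · exact httend.comp (tendsto_add_atTop_nat 1)
    · exact httend
    · exact tendsto_const_nhds
    · exact tendsto_const_nhds
  -- summability
  have hbound : ∀ i : ℕ, ‖f i‖ ≤ (1 / goldenRatio) ^ i := by
    intro i
    have hL' : goldenRatio ^ i ≤ (lucas (m * (i + 2)) : ℝ) := by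
      have hni : i + 2 ≤ m * (i + 2) := Nat.le_mul_of_pos_left _ hm
      have hmono : goldenRatio ^ (i + 2) ≤ goldenRatio ^ (m * (i + 2)) :=
        pow_le_pow_right₀ one_lt_goldenRatio.le hni
      have hgi : (1 : ℝ) ≤ goldenRatio ^ i := one_le_pow₀ one_lt_goldenRatio.le
      have := lucas_lower (m * (i + 2))
      have hexp : goldenRatio ^ (i + 2) = goldenRatio ^ i * (goldenRatio + 1) := by
        rw [pow_add, goldenRatio_sq]
      nlinarith [one_lt_goldenRatio]
    have h1 := hLpos (m * i)
    have h2 := hLpos (m * (i + 2))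
    have hfabs : ‖f i‖ = 1 / ((lucas (m * i) : ℝ) * (lucas (m * (i + 2)) : ℝ)) := by
      simp only [hf, Real.norm_eq_abs, abs_div, abs_pow, abs_neg, abs_one, one_pow, abs_mul,
        abs_of_pos h1, abs_of_pos h2]
    rw [hfabs, div_pow, one_pow]
    apply div_le_div_of_nonneg_left zero_le_one (pow_pos goldenRatio_pos i)
    calc goldenRatio ^ i = 1 * goldenRatio ^ i := (one_mul _).symm
      _ ≤ (lucas (m * i) : ℝ) * (lucas (m * (i + 2)) : ℝ) := by
          apply mul_le_mul (hLone _) hL' (by positivity) (hLpos _).le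
  have hsummable : Summable fun i => ‖f i‖ := by
    apply Summable.of_nonneg_of_le (fun i => norm_nonneg _) hbound
    apply summable_geometric_of_lt_one (by positivity)
    rw [div_lt_one goldenRatio_pos]
    exact one_lt_goldenRatio
  exact (hasSum_iff_tendsto_nat_of_summable_norm hsummable).mpr hsumlim
end
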